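/- Uniform bound on normalized dual potentials: suppose ‖c‖_∞ ≤ M and φ : X → ℝ satisfies the fixed-point relation φ_z = -η log(∑_y ∑_{x̄∈X^{m-2}} exp((∑_{i=3}^m φ_{x̄ⁱ} - c(y,z,x̄))/η) (⊗^{m-2}ρ)_{x̄} ρ̄_y) for all z, where ρ̄_y = ρ_y / ∑_{x̄∈X^{m-1}} exp((∑_{i=2}^m φ_{x̄ⁱ} - c(y,x̄))/η) ρ̃_{x̄}, together with the normalization φ_{x₀} = 0. Then ‖φ‖_∞ ≤ 4M. -/

import Mathlib

/-- Uniform bound on normalized dual potentials: if `‖c‖_∞ ≤ M` and `φ` satisfies the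
first-order fixed-point relation of the symmetric regularized dual problem (with `m = k+2`
marginals all equal to `ρ`), normalized by `φ(x₀) = 0`, then `‖φ‖_∞ ≤ 4M`. -/
theorem stmt_10 {X : Type*} [Fintype X] [Nonempty X]
    (ρ : X → ℝ) (hρ : ∀ x, 0 < ρ x) (hρs : ∑ x, ρ x = 1)
    (k : ℕ) (c : (Fin (k + 2) → X) → ℝ) (M η : ℝ) (hη : 0 < η)
    (hc : ∀ xb, |c xb| ≤ M)
    (x0 : X) (φ : X → ℝ) (hφ0 : φ x0 = 0)
    (hfix : ∀ z, φ z = -η * Real.log (∑ y, ∑ xb : Fin k → X,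
      Real.exp (((∑ i, φ (xb i)) - c (Fin.cons y (Fin.cons z xb))) / η)
        * (∏ i, ρ (xb i))
        * (ρ y / ∑ xb' : Fin (k + 1) → X,
            Real.exp (((∑ i, φ (xb' i)) - c (Fin.cons y xb')) / η) * ∏ i, ρ (xb' i)))) :
    ∀ z, |φ z| ≤ 4 * M := by
  have hM : 0 ≤ M := le_trans (abs_nonneg _) (hc fun _ => x0)
  set T : X → ℝ := fun y => ∑ xb' : Fin (k + 1) → X,
      Real.exp (((∑ i, φ (xb' i)) - c (Fin.cons y xb')) / η) * ∏ i, ρ (xb' i) with hT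
  have hTpos : ∀ y, 0 < T y := fun y =>
    Finset.sum_pos (fun xb' _ => mul_pos (Real.exp_pos _)
      (Finset.prod_pos fun i _ => hρ _)) Finset.univ_nonempty
  set S : X → ℝ := fun z => ∑ y, ∑ xb : Fin k → X,
      Real.exp (((∑ i, φ (xb i)) - c (Fin.cons y (Fin.cons z xb))) / η)
        * (∏ i, ρ (xb i)) * (ρ y / T y) with hS
  have hSpos : ∀ z, 0 < S z := fun z =>
    Finset.sum_pos (fun y _ => Finset.sum_pos (fun xb _ =>
      mul_pos (mul_pos (Real.exp_pos _) (Finset.prod_pos fun i _ => hρ _))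
        (div_pos (hρ y) (hTpos y))) Finset.univ_nonempty) Finset.univ_nonempty
  have key : ∀ z z', S z ≤ Real.exp (2 * M / η) * S z' := by
    intro z z'
    rw [hS]
    simp only
    rw [Finset.mul_sum]
    refine Finset.sum_le_sum fun y _ => ?_
    rw [Finset.mul_sum]
    refine Finset.sum_le_sum fun xb _ => ?_
    have hAB : 0 ≤ (∏ i, ρ (xb i)) * (ρ y / T y) :=
      mul_nonneg (Finset.prod_nonneg fun i _ => (hρ _).le)
        (div_nonneg (hρ y).le (hTpos y).le)
    have hexp : Real.exp (((∑ i, φ (xb i)) - c (Fin.cons y (Fin.cons z xb))) / η)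
        ≤ Real.exp (2 * M / η)
          * Real.exp (((∑ i, φ (xb i)) - c (Fin.cons y (Fin.cons z' xb))) / η) := by
      rw [← Real.exp_add]
      apply Real.exp_le_exp.mpr
      have h1 := abs_le.mp (hc (Fin.cons y (Fin.cons z xb)))
      have h2 := abs_le.mp (hc (Fin.cons y (Fin.cons z' xb)))
      rw [← add_div]
      exact (div_le_div_iff_of_pos_right hη).mpr (by linarith [h1.1, h1.2, h2.1, h2.2])
    calc Real.exp (((∑ i, φ (xb i)) - c (Fin.cons y (Fin.cons z xb))) / η)
          * (∏ i, ρ (xb i)) * (ρ y / T y)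
        = Real.exp (((∑ i, φ (xb i)) - c (Fin.cons y (Fin.cons z xb))) / η)
          * ((∏ i, ρ (xb i)) * (ρ y / T y)) := by ring
      _ ≤ (Real.exp (2 * M / η)
          * Real.exp (((∑ i, φ (xb i)) - c (Fin.cons y (Fin.cons z' xb))) / η))
          * ((∏ i, ρ (xb i)) * (ρ y / T y)) := mul_le_mul_of_nonneg_right hexp hAB
      _ = Real.exp (2 * M / η)
          * (Real.exp (((∑ i, φ (xb i)) - c (Fin.cons y (Fin.cons z' xb))) / η)
          * (∏ i, ρ (xb i)) * (ρ y / T y)) := by ring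
  have hfix' : ∀ z, φ z = -η * Real.log (S z) := hfix
  have hlog0 : Real.log (S x0) = 0 := by
    have h := hfix' x0
    rw [hφ0] at h
    have : η * Real.log (S x0) = 0 := by linarith
    rcases mul_eq_zero.mp this with h' | h'
    · exact absurd h' (ne_of_gt hη)
    · exact h'
  have hlogle : ∀ z z', Real.log (S z) ≤ 2 * M / η + Real.log (S z') := by
    intro z z'
    have h1 : Real.log (S z) ≤ Real.log (Real.exp (2 * M / η) * S z') :=
      Real.log_le_log (hSpos z) (key z z')
    rwa [Real.log_mul (Real.exp_ne_zero _) (ne_of_gt (hSpos z')), Real.log_exp] at h1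
  intro z
  have hu := hlogle z x0
  have hl := hlogle x0 z
  rw [hlog0] at hu hl
  -- hu : log (S z) ≤ 2M/η ; hl : 0 ≤ 2M/η + log (S z)
  have heq : η * (2 * M / η) = 2 * M := by field_simp
  have hub : η * Real.log (S z) ≤ 2 * M := by
    have := mul_le_mul_of_nonneg_left hu hη.le
    nlinarith
  have hlb : -(2 * M) ≤ η * Real.log (S z) := by
    have h' : -(2 * M / η) ≤ Real.log (S z) := by linarith
    have := mul_le_mul_of_nonneg_left h' hη.le
    nlinarith
  rw [hfix' z, abs_le]
  constructor <;> nlinarith
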